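/- Let p, v, t be real numbers with p > 1, v > 1 and t > 0, and set x̂ = t · v^(1/(1−p)) (real powers), so 0 < x̂ < t. Define g : ℝ → ℝ by g(x) = (t^p − x^p)^(1/p). Then g has derivative D = −(t^p − x̂^p)^((1−p)/p) · x̂^(p−1) at x̂, and g(x̂) + D·(v·t − x̂) = 0; that is, the tangent line to the graph of g at x = x̂ passes through the point (v·t, 0). -/

import Mathlib

open Real

/-- The tangent line to the first-quadrant arc `g(x) = (t^p - x^p)^(1/p)` of the
`p`-circle of radius `t` at `x̂ = t·v^(1/(1-p))` has slope
`D = -(t^p - x̂^p)^((1-p)/p)·x̂^(p-1)` and passes through `(v·t, 0)`. -/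
theorem stmt_6 (p v t : ℝ) (hp : 1 < p) (hv : 1 < v) (ht : 0 < t) :
    let xhat : ℝ := t * v ^ (1 / (1 - p))
    let g : ℝ → ℝ := fun x => (t ^ p - x ^ p) ^ (1 / p)
    let D : ℝ := -((t ^ p - xhat ^ p) ^ ((1 - p) / p) * xhat ^ (p - 1))
    HasDerivAt g D xhat ∧ g xhat + D * (v * t - xhat) = 0 := by
  intro xhat g D
  have hp0 : (0:ℝ) < p := by linarith
  have h1p : 1 - p < 0 := by linarith
  have h1pne : (1 - p) ≠ 0 := ne_of_lt h1p
  have hv0 : (0:ℝ) < v := by linarith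
  have hexp : 1 / (1 - p) < 0 := div_neg_of_pos_of_neg one_pos h1p
  have hc0 : 0 < v ^ (1 / (1 - p)) := Real.rpow_pos_of_pos hv0 _
  have hc1 : v ^ (1 / (1 - p)) < 1 := Real.rpow_lt_one_of_one_lt_of_neg hv hexp
  have hx0 : 0 < xhat := mul_pos ht hc0
  have hxt : xhat < t := by
    have : t * v ^ (1 / (1 - p)) < t * 1 := by
      exact mul_lt_mul_of_pos_left hc1 ht
    simpa [xhat] using this
  have hA : 0 < t ^ p - xhat ^ p :=
    sub_pos.mpr (Real.rpow_lt_rpow hx0.le hxt hp0)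
  -- key algebraic identity
  have hcp : (v ^ (1 / (1 - p))) ^ p = v ^ (p / (1 - p)) := by
    rw [← Real.rpow_mul hv0.le]
    congr 1
    ring
  have key : t ^ p - xhat ^ p = xhat ^ (p - 1) * (v * t - xhat) := by
    have hxp : xhat ^ p = t ^ p * v ^ (p / (1 - p)) := by
      rw [show xhat = t * v ^ (1 / (1 - p)) from rfl,
        Real.mul_rpow ht.le hc0.le, ← Real.rpow_mul hv0.le]
      congr 1
      field_simp
    have hxp1 : xhat ^ (p - 1) = t ^ (p - 1) * v⁻¹ := by
      rw [show xhat = t * v ^ (1 / (1 - p)) from rfl,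
        Real.mul_rpow ht.le hc0.le, ← Real.rpow_mul hv0.le]
      congr 1
      rw [show (1 / (1 - p)) * (p - 1) = -1 by field_simp; ring, Real.rpow_neg_one]
    have hts : t ^ (p - 1) * t = t ^ p := by
      nth_rewrite 2 [show t = t ^ (1:ℝ) from (Real.rpow_one t).symm]
      rw [← Real.rpow_add ht]; ring_nf
    have hcv : v ^ (p / (1 - p)) = v ^ (1 / (1 - p)) * v⁻¹ := by
      rw [← Real.rpow_neg_one v, ← Real.rpow_add hv0]
      congr 1
      field_simp
      ring
    rw [hxp, hxp1, show xhat = t * v ^ (1 / (1 - p)) from rfl, hcv]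
    have hvne : v ≠ 0 := hv0.ne'
    field_simp
    linear_combination (v ^ (1 / (1 - p)) - v) * hts
  -- derivative
  have hinner : HasDerivAt (fun x : ℝ => t ^ p - x ^ p) (-(p * xhat ^ (p - 1))) xhat := by
    have h := (Real.hasDerivAt_rpow_const (p := p) (x := xhat) (Or.inl hx0.ne')).const_sub (t ^ p)
    simpa using h
  have houter := hinner.rpow_const (p := 1 / p) (Or.inl hA.ne')
  have hDeq : (-(p * xhat ^ (p - 1))) * (1 / p) * (t ^ p - xhat ^ p) ^ (1 / p - 1) = D := by
    rw [show (1:ℝ) / p - 1 = (1 - p) / p by field_simp]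
    show _ = -((t ^ p - xhat ^ p) ^ ((1 - p) / p) * xhat ^ (p - 1))
    field_simp
  have hderiv : HasDerivAt g D xhat := by
    have := houter
    rw [hDeq] at this
    exact this
  refine ⟨hderiv, ?_⟩
  show (t ^ p - xhat ^ p) ^ (1 / p) +
      -((t ^ p - xhat ^ p) ^ ((1 - p) / p) * xhat ^ (p - 1)) * (v * t - xhat) = 0
  have : (t ^ p - xhat ^ p) ^ ((1 - p) / p) * (xhat ^ (p - 1) * (v * t - xhat))
      = (t ^ p - xhat ^ p) ^ (1 / p) := by
    rw [← key]
    nth_rewrite 2 [show t ^ p - xhat ^ p = (t ^ p - xhat ^ p) ^ (1:ℝ) from (Real.rpow_one _).symm]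
    rw [← Real.rpow_add hA]
    congr 1
    field_simp
    ring
  nlinarith [this]
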